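/- The matrix Q_{2n}(B − λI)^{n−1}, where B = T ⊕ conj(T) with T upper-triangular Toeplitz with real diagonal λ and nonzero superdiagonal entry t₂, has exactly one positive eigenvalue and one negative eigenvalue (both equal to ±|t₂|^{n−1}), all other eigenvalues being zero. -/

import Mathlib

open Matrix


def jordanBlock (n : ℕ) (lam : ℂ) : Matrix (Fin n) (Fin n) ℂ :=
  fun i j => if (i : ℕ) = (j : ℕ) then lam else if (i : ℕ) + 1 = (j : ℕ) then 1 else 0

def backQ (n : ℕ) : Matrix (Fin n) (Fin n) ℂ :=
  fun i j => if (i : ℕ) + (j : ℕ) + 1 = n then 1 else 0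

def dsum {n : ℕ} (A B : Matrix (Fin n) (Fin n) ℂ) :
    Matrix (Fin (n + n)) (Fin (n + n)) ℂ :=
  Matrix.reindex finSumFinEquiv finSumFinEquiv (Matrix.fromBlocks A 0 0 B)



lemma trace_eq_sum_eig {m : ℕ} (M : Matrix (Fin m) (Fin m) ℂ) (hH : M.IsHermitian) :
    M.trace = ∑ i, (hH.eigenvalues i : ℂ) := by
  conv_lhs => rw [hH.spectral_theorem]
  rw [Unitary.conjStarAlgAut_apply, trace_mul_cycle, Unitary.coe_star_mul_self, one_mul, trace_diagonal]
  simp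

lemma trace_sq_eq_sum_eig {m : ℕ} (M : Matrix (Fin m) (Fin m) ℂ) (hH : M.IsHermitian) :
    (M * M).trace = ∑ i, ((hH.eigenvalues i : ℂ))^2 := by
  set U := (hH.eigenvectorUnitary : Matrix (Fin m) (Fin m) ℂ) with hU
  set D : Matrix (Fin m) (Fin m) ℂ := diagonal (RCLike.ofReal ∘ hH.eigenvalues) with hD
  have h1 : star U * U = 1 := Unitary.coe_star_mul_self _
  have : M * M = U * (D * D) * star U := by
    conv_lhs => rw [hH.spectral_theorem]
    rw [Unitary.conjStarAlgAut_apply, ← hU, ← hD]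
    calc U * D * star U * (U * D * star U) = U * (D * ((star U * U) * D)) * star U := by
          noncomm_ring
      _ = U * (D * D) * star U := by rw [h1, one_mul]
  rw [this, trace_mul_cycle, h1, one_mul, hD, diagonal_mul_diagonal, trace_diagonal]
  simp [pow_two]

lemma key {m : ℕ} (a b : Fin m) (hab : a ≠ b) (c : ℂ) (hc : c ≠ 0)
    (M : Matrix (Fin m) (Fin m) ℂ)
    (hM : M = Matrix.single a b c + Matrix.single b a ((starRingEnd ℂ) c)) :
    ∃ hH : M.IsHermitian,
      Nat.card {i // 0 < hH.eigenvalues i} = 1 ∧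
      Nat.card {i // hH.eigenvalues i < 0} = 1 ∧
      ∀ i, hH.eigenvalues i = ‖c‖ ∨
        hH.eigenvalues i = -(‖c‖) ∨ hH.eigenvalues i = 0 := by
  set r : ℝ := ‖c‖ with hr
  have hr0 : 0 < r := by simpa [hr] using hc
  have hH : M.IsHermitian := by
    rw [IsHermitian, hM]
    ext i j
    simp only [conjTranspose_apply, Matrix.add_apply, Matrix.single, of_apply]
    by_cases h1 : i = a <;> by_cases h2 : j = b <;> by_cases h3 : i = b <;>
      by_cases h4 : j = a <;>
      simp_all [Ne.symm hab, eq_comm]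
  have hcc : c * (starRingEnd ℂ) c = ((r^2 : ℝ) : ℂ) := by
    rw [Complex.mul_conj, Complex.normSq_eq_norm_sq]
  have hM2 : M * M = Matrix.single a a ((r^2:ℝ):ℂ) + Matrix.single b b ((r^2:ℝ):ℂ) := by
    rw [hM, add_mul, mul_add, mul_add, single_mul_single_of_ne (c := c) a b a (Ne.symm hab),
      single_mul_single_same, single_mul_single_same,
      single_mul_single_of_ne (c := (starRingEnd ℂ) c) b a b hab, hcc,
      mul_comm ((starRingEnd ℂ) c) c, hcc, zero_add, add_zero]
  have hM3 : M * M * M = ((r^2:ℝ):ℂ) • M := by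
    rw [hM2]
    conv_lhs => rw [hM]
    conv_rhs => rw [hM]
    rw [add_mul, mul_add, mul_add, single_mul_single_same,
      single_mul_single_of_ne (c := ((r^2:ℝ):ℂ)) a a b hab,
      single_mul_single_of_ne (c := ((r^2:ℝ):ℂ)) b b a (Ne.symm hab),
      single_mul_single_same, smul_add, smul_single, smul_single,
      smul_eq_mul, smul_eq_mul, add_zero, zero_add]
  have tri : ∀ i, hH.eigenvalues i = r ∨ hH.eigenvalues i = -r ∨ hH.eigenvalues i = 0 := by
    intro i
    set μ := hH.eigenvalues i with hμ
    have hv := hH.mulVec_eigenvectorBasis i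
    set v : Fin m → ℂ := ⇑(hH.eigenvectorBasis i) with hvdef
    have hvne : v ≠ 0 := by
      intro h
      exact hH.eigenvectorBasis.orthonormal.ne_zero i (by ext x; exact congrFun h x)
    obtain ⟨x, hx⟩ := Function.ne_iff.mp hvne
    have h3 : (M * M * M) *ᵥ v = μ • μ • μ • v := by
      rw [← mulVec_mulVec, ← mulVec_mulVec, hv, mulVec_smul, hv, mulVec_smul, mulVec_smul, hv]
    have h4 : (M * M * M) *ᵥ v = ((r^2:ℝ):ℂ) • μ • v := by
      rw [hM3, smul_mulVec, hv]
    have h5 := congrFun (h3.symm.trans h4) x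
    simp only [Pi.smul_apply, Complex.real_smul, smul_eq_mul] at h5
    have h6 : ((μ^3 : ℝ):ℂ) * v x = ((r^2*μ : ℝ):ℂ) * v x := by
      push_cast at h5 ⊢
      linear_combination h5
    have h7 : μ^3 = r^2*μ := by exact_mod_cast mul_right_cancel₀ hx h6
    have h8 : (μ - r) * ((μ + r) * μ) = 0 := by linear_combination h7
    rcases mul_eq_zero.mp h8 with h | h
    · left; linarith
    rcases mul_eq_zero.mp h with h | h
    · right; left; linarith
    · right; right; exact h
  have htr : M.trace = 0 := by
    rw [hM, trace_add, trace_single_eq_of_ne a b c hab,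
      trace_single_eq_of_ne b a ((starRingEnd ℂ) c) (Ne.symm hab), add_zero]
  have t1 : ∑ i, hH.eigenvalues i = 0 := by
    have h := trace_eq_sum_eig M hH
    rw [htr] at h
    have h' : ((∑ i, hH.eigenvalues i : ℝ) : ℂ) = ((0:ℝ):ℂ) := by
      push_cast
      linear_combination -h
    exact_mod_cast h'
  have htr2 : (M * M).trace = ((2*r^2 : ℝ):ℂ) := by
    rw [hM2, trace_add, trace_single_eq_same, trace_single_eq_same]
    push_cast; ring
  have t2 : ∑ i, (hH.eigenvalues i)^2 = 2 * r^2 := by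
    have h := trace_sq_eq_sum_eig M hH
    rw [htr2] at h
    have h' : ((∑ i, (hH.eigenvalues i)^2 : ℝ) : ℂ) = ((2 * r^2 : ℝ) : ℂ) := by
      push_cast at h ⊢
      linear_combination -h
    exact_mod_cast h'
  refine ⟨hH, ?_, ?_, tri⟩
  · have hs : ∀ i : Fin m, (if 0 < hH.eigenvalues i then (2*r^2 : ℝ) else 0)
        = (hH.eigenvalues i)^2 + r * hH.eigenvalues i := by
      intro i
      rcases tri i with h | h | h <;> rw [h]
      · rw [if_pos hr0]; ring
      · rw [if_neg (by linarith)]; ring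
      · rw [if_neg (by linarith)]; ring
    have hsum : ∑ i, (if 0 < hH.eigenvalues i then (2*r^2:ℝ) else 0) = 2*r^2 := by
      rw [Finset.sum_congr rfl (fun i _ => hs i), Finset.sum_add_distrib, ← Finset.mul_sum, t1, t2]
      ring
    rw [← Finset.sum_filter, Finset.sum_const, nsmul_eq_mul] at hsum
    have h2 : (2*r^2 : ℝ) ≠ 0 := by positivity
    have hcard : (Finset.univ.filter (fun i => 0 < hH.eigenvalues i)).card = 1 := by
      have := mul_right_cancel₀ h2 (hsum.trans (one_mul (2*r^2:ℝ)).symm)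
      exact_mod_cast this
    rw [Nat.card_eq_fintype_card, Fintype.card_subtype]
    exact hcard
  · have hs : ∀ i : Fin m, (if hH.eigenvalues i < 0 then (2*r^2 : ℝ) else 0)
        = (hH.eigenvalues i)^2 - r * hH.eigenvalues i := by
      intro i
      rcases tri i with h | h | h <;> rw [h]
      · rw [if_neg (by linarith)]; ring
      · rw [if_pos (by linarith)]; ring
      · rw [if_neg (by linarith)]; ring
    have hsum : ∑ i, (if hH.eigenvalues i < 0 then (2*r^2:ℝ) else 0) = 2*r^2 := by
      rw [Finset.sum_congr rfl (fun i _ => hs i), Finset.sum_sub_distrib, ← Finset.mul_sum, t1, t2]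
      ring
    rw [← Finset.sum_filter, Finset.sum_const, nsmul_eq_mul] at hsum
    have h2 : (2*r^2 : ℝ) ≠ 0 := by positivity
    have hcard : (Finset.univ.filter (fun i => hH.eigenvalues i < 0)).card = 1 := by
      have := mul_right_cancel₀ h2 (hsum.trans (one_mul (2*r^2:ℝ)).symm)
      exact_mod_cast this
    rw [Nat.card_eq_fintype_card, Fintype.card_subtype]
    exact hcard



lemma nilpow {m : ℕ} (N : Matrix (Fin m) (Fin m) ℂ) (c : ℂ)
    (h0 : ∀ i j : Fin m, (j:ℕ) ≤ (i:ℕ) → N i j = 0)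
    (h1 : ∀ i j : Fin m, (j:ℕ) = (i:ℕ) + 1 → N i j = c) :
    ∀ (k:ℕ) (i j : Fin m), ((j:ℕ) < (i:ℕ) + k → (N^k) i j = 0) ∧
      ((j:ℕ) = (i:ℕ) + k → (N^k) i j = c^k) := by
  intro k
  induction k with
  | zero =>
    intro i j
    refine ⟨fun h => ?_, fun h => ?_⟩
    · rw [pow_zero, one_apply_ne' ?_]
      intro he; rw [he] at h; omega
    · have : j = i := Fin.ext (by omega)
      rw [pow_zero, this, one_apply_eq, pow_zero]
  | succ k ih =>
    intro i j
    have expand : (N^(k+1)) i j = ∑ l, N i l * (N^k) l j := by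
      rw [pow_succ', mul_apply]
    constructor
    · intro h
      rw [expand]
      refine Finset.sum_eq_zero fun l _ => ?_
      by_cases hl : (l:ℕ) ≤ (i:ℕ)
      · rw [h0 i l hl, zero_mul]
      · rw [(ih l j).1 (by omega), mul_zero]
    · intro h
      have hlt : (i:ℕ) + 1 < m := by omega
      set l0 : Fin m := ⟨(i:ℕ)+1, hlt⟩ with hl0
      rw [expand, Finset.sum_eq_single l0]
      · rw [h1 i l0 rfl, (ih l0 j).2 (by simp [hl0]; omega), pow_succ]
        ring
      · intro l _ hne
        by_cases hl : (l:ℕ) ≤ (i:ℕ)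
        · rw [h0 i l hl, zero_mul]
        · have : (i:ℕ) + 1 ≠ (l:ℕ) := fun he => hne (Fin.ext he.symm)
          rw [(ih l j).1 (by omega), mul_zero]
      · intro hin; exact absurd (Finset.mem_univ l0) hin

lemma dsum_mul {n : ℕ} (A B C D : Matrix (Fin n) (Fin n) ℂ) :
    dsum A B * dsum C D = dsum (A * C) (B * D) := by
  unfold dsum
  rw [reindex_apply, reindex_apply, reindex_apply, submatrix_mul_equiv,
    fromBlocks_multiply]
  simp

lemma dsum_pow {n : ℕ} (A B : Matrix (Fin n) (Fin n) ℂ) (k : ℕ) :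
    (dsum A B) ^ k = dsum (A ^ k) (B ^ k) := by
  induction k with
  | zero =>
    simp only [pow_zero]
    unfold dsum
    rw [fromBlocks_one, reindex_apply, submatrix_one_equiv]
  | succ k ih =>
    rw [pow_succ, pow_succ, pow_succ, ih, dsum_mul]

lemma dsum_sub_smul_one {n : ℕ} (A B : Matrix (Fin n) (Fin n) ℂ) (z : ℂ) :
    dsum A B - z • 1 = dsum (A - z • 1) (B - z • 1) := by
  ext i j
  obtain ⟨x, rfl⟩ := finSumFinEquiv.surjective i
  obtain ⟨y, rfl⟩ := finSumFinEquiv.surjective j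
  simp only [dsum, reindex_apply, submatrix_apply, Matrix.sub_apply, Matrix.smul_apply, one_apply,
    Equiv.symm_apply_apply, Equiv.apply_eq_iff_eq, smul_eq_mul, mul_ite, mul_one, mul_zero]
  rcases x with x | x <;> rcases y with y | y <;>
    simp [fromBlocks, one_apply, mul_ite]

lemma backQ_mul {m : ℕ} (D : Matrix (Fin m) (Fin m) ℂ) (i j : Fin m) :
    (backQ m * D) i j = D ⟨m - 1 - (i:ℕ), by have := i.isLt; omega⟩ j := by
  have him := i.isLt
  rw [mul_apply, Finset.sum_eq_single (⟨m - 1 - (i:ℕ), by omega⟩ : Fin m)]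
  · have : backQ m i ⟨m - 1 - (i:ℕ), by omega⟩ = 1 := by
      simp only [backQ]
      exact if_pos (by omega)
    rw [this, one_mul]
  · intro l _ hne
    have hl : (l : ℕ) ≠ m - 1 - (i:ℕ) := fun he => hne (Fin.ext he)
    have hL := l.isLt
    have : backQ m i l = 0 := if_neg (by omega)
    rw [this, zero_mul]
  · intro hin; exact absurd (Finset.mem_univ _) hin

lemma dsum_entry {n k : ℕ} (hk : n = k + 1) (P P' : Matrix (Fin n) (Fin n) ℂ) (c c' : ℂ)
    (hP : ∀ i j : Fin n, P i j = if (i:ℕ) = 0 ∧ (j:ℕ) = k then c else 0)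
    (hP' : ∀ i j : Fin n, P' i j = if (i:ℕ) = 0 ∧ (j:ℕ) = k then c' else 0)
    (i j : Fin (n + n)) :
    dsum P P' i j = if (i:ℕ) = 0 ∧ (j:ℕ) = k then c
      else if (i:ℕ) = n ∧ (j:ℕ) = n + k then c' else 0 := by
  obtain ⟨x, rfl⟩ := finSumFinEquiv.surjective i
  obtain ⟨y, rfl⟩ := finSumFinEquiv.surjective j
  simp only [dsum, reindex_apply, submatrix_apply, Equiv.symm_apply_apply]
  rcases x with x | x <;> rcases y with y | y <;>
    have hx := ‹Fin n›.isLt <;>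
    simp only [fromBlocks_apply₁₁, fromBlocks_apply₁₂, fromBlocks_apply₂₁, fromBlocks_apply₂₂,
      finSumFinEquiv_apply_left, finSumFinEquiv_apply_right, Fin.coe_castAdd, Fin.coe_natAdd,
      hP, hP', Matrix.zero_apply]
  · have := x.isLt; have := y.isLt
    split_ifs <;> grind
  · have := x.isLt; have := y.isLt
    split_ifs <;> grind
  · have := x.isLt; have := y.isLt
    split_ifs <;> grind
  · have := x.isLt; have := y.isLt
    split_ifs <;> grind

theorem inertia_of_Q_times_power (n : ℕ) (hn : 0 < n) (lam : ℝ) (t : ℕ → ℂ)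
    (T : Matrix (Fin n) (Fin n) ℂ)
    (hT : ∀ i j : Fin n, T i j = if (i : ℕ) ≤ (j : ℕ) then t ((j : ℕ) - (i : ℕ)) else 0)
    (ht0 : t 0 = (lam : ℂ)) (ht1 : t 1 ≠ 0) :
    ∃ hM : (backQ (n + n) *
        (dsum T (T.map (starRingEnd ℂ)) - (lam : ℂ) • 1) ^ (n - 1)).IsHermitian,
      Nat.card {i // 0 < hM.eigenvalues i} = 1 ∧
      Nat.card {i // hM.eigenvalues i < 0} = 1 ∧
      ∀ i, hM.eigenvalues i = ‖t 1‖ ^ (n - 1) ∨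
        hM.eigenvalues i = -(‖t 1‖ ^ (n - 1)) ∨
        hM.eigenvalues i = 0 := by
  obtain ⟨k, rfl⟩ : ∃ k, n = k + 1 := ⟨n - 1, by omega⟩
  simp only [Nat.add_sub_cancel]
  have hmap1 : (T.map (starRingEnd ℂ)) - (lam:ℂ) • 1
      = (T - (lam:ℂ) • 1).map (starRingEnd ℂ) := by
    ext i j
    by_cases h : i = j <;>
      simp [map_apply, Matrix.sub_apply, Matrix.smul_apply, one_apply, h, _root_.map_sub,
        Complex.conj_ofReal]
  have hsub : dsum T (T.map (starRingEnd ℂ)) - (lam:ℂ) • 1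
      = dsum (T - (lam:ℂ) • 1) ((T - (lam:ℂ) • 1).map (starRingEnd ℂ)) := by
    rw [dsum_sub_smul_one, hmap1]
  set N : Matrix (Fin (k+1)) (Fin (k+1)) ℂ := T - (lam:ℂ) • 1 with hN
  have hN0 : ∀ i j : Fin (k+1), (j:ℕ) ≤ (i:ℕ) → N i j = 0 := by
    intro i j hij
    rw [hN, Matrix.sub_apply, Matrix.smul_apply, one_apply, hT]
    rcases Nat.lt_or_ge (j:ℕ) (i:ℕ) with hlt | hge
    · rw [if_neg (by omega), if_neg (fun he => by rw [he] at hlt; omega)]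
      simp
    · have hIJ : i = j := Fin.ext (by omega)
      subst hIJ
      rw [if_pos le_rfl, Nat.sub_self, ht0, if_pos rfl]
      simp
  have hN1 : ∀ i j : Fin (k+1), (j:ℕ) = (i:ℕ) + 1 → N i j = t 1 := by
    intro i j hij
    rw [hN, Matrix.sub_apply, Matrix.smul_apply, one_apply, hT, if_pos (by omega),
      if_neg (fun he => by rw [he] at hij; omega), show (j:ℕ) - (i:ℕ) = 1 by omega]
    simp
  have hN0' : ∀ i j : Fin (k+1), (j:ℕ) ≤ (i:ℕ) → (N.map (starRingEnd ℂ)) i j = 0 := by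
    intro i j h; simp [map_apply, hN0 i j h]
  have hN1' : ∀ i j : Fin (k+1), (j:ℕ) = (i:ℕ) + 1 →
      (N.map (starRingEnd ℂ)) i j = (starRingEnd ℂ) (t 1) := by
    intro i j h; simp [map_apply, hN1 i j h]
  have hP := nilpow N (t 1) hN0 hN1 k
  have hP' := nilpow (N.map (starRingEnd ℂ)) ((starRingEnd ℂ) (t 1)) hN0' hN1' k
  have hPe : ∀ i j : Fin (k+1), (N^k) i j
      = if (i:ℕ) = 0 ∧ (j:ℕ) = k then (t 1)^k else 0 := by
    intro i j
    have hi := i.isLt; have hj := j.isLt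
    by_cases h : (i:ℕ) = 0 ∧ (j:ℕ) = k
    · rw [if_pos h]; exact (hP i j).2 (by omega)
    · rw [if_neg h]; exact (hP i j).1 (by omega)
  have hP'e : ∀ i j : Fin (k+1), ((N.map (starRingEnd ℂ))^k) i j
      = if (i:ℕ) = 0 ∧ (j:ℕ) = k then ((starRingEnd ℂ) (t 1))^k else 0 := by
    intro i j
    have hi := i.isLt; have hj := j.isLt
    by_cases h : (i:ℕ) = 0 ∧ (j:ℕ) = k
    · rw [if_pos h]; exact (hP' i j).2 (by omega)
    · rw [if_neg h]; exact (hP' i j).1 (by omega)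
  have hDe := dsum_entry rfl (N^k) ((N.map (starRingEnd ℂ))^k)
    ((t 1)^k) (((starRingEnd ℂ) (t 1))^k) hPe hP'e
  set a : Fin (k+1+(k+1)) := ⟨k+1+k, by omega⟩ with ha
  set b : Fin (k+1+(k+1)) := ⟨k, by omega⟩ with hb
  have hMeq : backQ (k+1+(k+1)) * dsum (N^k) ((N.map (starRingEnd ℂ))^k)
      = Matrix.single a b ((t 1)^k)
        + Matrix.single b a ((starRingEnd ℂ) ((t 1)^k)) := by
    ext i j
    rw [backQ_mul, hDe]
    have hi := i.isLt; have hj := j.isLt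
    simp only [Matrix.add_apply, Matrix.single, of_apply, ha, hb, Fin.ext_iff, map_pow]
    split_ifs <;> first | rfl | omega | (exfalso; omega) | simp
  have hfinal : backQ (k+1+(k+1)) * (dsum N (N.map (starRingEnd ℂ)))^k
      = Matrix.single a b ((t 1)^k)
        + Matrix.single b a ((starRingEnd ℂ) ((t 1)^k)) := by
    rw [dsum_pow, hMeq]
  have hEQ : backQ (k+1+(k+1)) * (dsum T (T.map (starRingEnd ℂ)) - (lam:ℂ) • 1) ^ k
      = Matrix.single a b ((t 1)^k)
        + Matrix.single b a ((starRingEnd ℂ) ((t 1)^k)) := by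
    rw [hsub]; exact hfinal
  obtain ⟨hH, h1, h2, h3⟩ := key a b (Fin.ne_of_val_ne (show k+1+k ≠ k by omega)) ((t 1)^k)
    (pow_ne_zero k ht1) _ hEQ
  exact ⟨hH, h1, h2, fun i => by simpa [map_pow] using h3 i⟩
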